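/- For every fixed 0 < δ < 1 there exist c > 0 and n₀ ∈ ℕ such that for all n ≥ n₀, a random n×n matrix with independent entries uniform on {−1,+1} has rank (over ℝ) at least (1−δ)n with probability at least 1 − 2^{−c·δ²·n²}. -/

import Mathlib

open scoped Classical

/-- The ±1 matrix associated to a Boolean matrix. -/
def signMatrix (n d : ℕ) (f : Matrix (Fin n) (Fin d) Bool) : Matrix (Fin n) (Fin d) ℝ :=
  fun i j => if f i j then 1 else -1

/-- The probability that a uniformly random `n × d` matrix with independent entries
uniform on `{−1, +1}` satisfies the property `P`. -/
noncomputable def probMatrix (n d : ℕ) (P : Matrix (Fin n) (Fin d) ℝ → Prop) : ℝ :=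
  ((Finset.univ.filter fun f : Matrix (Fin n) (Fin d) Bool => P (signMatrix n d f)).card : ℝ)
    / 2 ^ (n * d)

open Module Submodule in
theorem exists_coords (n : ℕ) : ∀ d (W : Submodule ℝ (Fin n → ℝ)), Module.finrank ℝ W ≤ d →
    ∃ S : Finset (Fin n), S.card ≤ Module.finrank ℝ W ∧
      ∀ x ∈ W, (∀ i ∈ S, x i = 0) → x = 0 := by
  intro d
  induction d with
  | zero =>
    intro W hW
    refine ⟨∅, by simp, fun x hx h0 => ?_⟩
    have : W = ⊥ := Submodule.finrank_eq_zero.mp (Nat.le_zero.mp hW)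
    simpa [this] using hx
  | succ d ih =>
    intro W hW
    by_cases hbot : W = ⊥
    · exact ⟨∅, by simp, fun x hx h0 => by simpa [hbot] using hx⟩
    · obtain ⟨x0, hx0W, hx0⟩ := Submodule.exists_mem_ne_zero_of_ne_bot hbot
      obtain ⟨i, hi⟩ : ∃ i, x0 i ≠ 0 := by
        by_contra h; push_neg at h; exact hx0 (funext h)
      set f : W →ₗ[ℝ] ℝ := (LinearMap.proj i).comp W.subtype with hf
      have hfsurj : LinearMap.range f = ⊤ := by
        rw [LinearMap.range_eq_top]
        intro y
        refine ⟨(y / x0 i) • ⟨x0, hx0W⟩, ?_⟩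
        simp only [hf, map_smul, LinearMap.comp_apply, LinearMap.proj_apply,
          Submodule.coe_subtype]
        rw [smul_eq_mul, div_mul_cancel₀ y hi]
      set W' : Submodule ℝ (Fin n → ℝ) := Submodule.map W.subtype (LinearMap.ker f) with hW'
      have hker : Module.finrank ℝ (LinearMap.ker f) + 1 = Module.finrank ℝ W := by
        have h1 := LinearMap.finrank_range_add_finrank_ker f
        rw [hfsurj] at h1
        simp only [finrank_top] at h1
        rw [Module.finrank_self] at h1
        omega
      have hW'rank : Module.finrank ℝ W' = Module.finrank ℝ (LinearMap.ker f) :=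
        Submodule.finrank_map_subtype_eq W (LinearMap.ker f)
      obtain ⟨S', hS'card, hS'⟩ := ih W' (by omega)
      refine ⟨insert i S', ?_, ?_⟩
      · calc (insert i S').card ≤ S'.card + 1 := Finset.card_insert_le _ _
          _ ≤ Module.finrank ℝ W' + 1 := by omega
          _ = Module.finrank ℝ W := by omega
      · intro x hx h0
        have hxi : x i = 0 := h0 i (Finset.mem_insert_self _ _)
        have hxW' : x ∈ W' := by
          refine ⟨⟨x, hx⟩, ?_, rfl⟩
          simpa [hf, LinearMap.mem_ker] using hxi
        exact hS' x hxW' (fun j hj => h0 j (Finset.mem_insert_of_mem hj))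

open Module Submodule in
/-- Odlyzko: at most `2^dim W` sign vectors lie in a subspace `W`. -/
theorem signVec_card_le (n : ℕ) (W : Submodule ℝ (Fin n → ℝ)) :
    (Finset.univ.filter fun b : Fin n → Bool =>
        (fun i => if b i then (1:ℝ) else -1) ∈ W).card ≤ 2 ^ Module.finrank ℝ W := by
  obtain ⟨S, hScard, hS⟩ := exists_coords n (Module.finrank ℝ W) W le_rfl
  have key : (Finset.univ.filter fun b : Fin n → Bool =>
      (fun i => if b i then (1:ℝ) else -1) ∈ W).card ≤ 2 ^ S.card := by
    have hinj : Set.InjOn (fun b : Fin n → Bool => fun i : ↥S => b i)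
        ↑(Finset.univ.filter fun b : Fin n → Bool =>
          (fun i => if b i then (1:ℝ) else -1) ∈ W) := ?_
    · calc _ ≤ (Finset.univ : Finset (↥S → Bool)).card :=
          Finset.card_le_card_of_injOn _ (fun _ _ => Finset.mem_univ _) hinj
        _ = 2 ^ S.card := by
          rw [Finset.card_univ]
          simp [Fintype.card_fun]
    · intro b hb b' hb' hbb'
      simp only [Finset.coe_filter, Finset.mem_univ, Set.mem_setOf_eq, true_and] at hb hb'
      have hsub : ((fun i => if b i then (1:ℝ) else -1) - fun i => if b' i then (1:ℝ) else -1)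
          ∈ W := W.sub_mem hb hb'
      have hzero : ∀ i ∈ S, ((fun i => if b i then (1:ℝ) else -1)
          - fun i => if b' i then (1:ℝ) else -1) i = 0 := by
        intro i hiS
        have : b i = b' i := congrFun hbb' ⟨i, hiS⟩
        simp [this]
      have := hS _ hsub hzero
      funext i
      have h2 := congrFun this i
      simp only [Pi.sub_apply, Pi.zero_apply, sub_eq_zero] at h2
      cases hbi : b i <;> cases hbi' : b' i <;>
        rw [hbi, hbi'] at h2 <;> simp at h2 ⊢ <;> norm_num at h2
  calc _ ≤ 2 ^ S.card := key
    _ ≤ 2 ^ Module.finrank ℝ W := Nat.pow_le_pow_right (by norm_num) hScard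

open Module Submodule in
theorem countA (n r : ℕ) (T : Finset (Fin n)) (hT : T.card = r) :
    (Finset.univ.filter fun f : Matrix (Fin n) (Fin n) Bool =>
        ∀ i ∉ T, signMatrix n n f i ∈ span ℝ (signMatrix n n f '' ↑T)).card
      ≤ 2 ^ (r * (n - r)) * 2 ^ (n * r) := by
  set s := Finset.univ.filter fun f : Matrix (Fin n) (Fin n) Bool =>
      ∀ i ∉ T, signMatrix n n f i ∈ span ℝ (signMatrix n n f '' ↑T) with hs
  set φ : Matrix (Fin n) (Fin n) Bool → Matrix (Fin n) (Fin n) Bool :=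
      fun f => fun i j => if i ∈ T then f i j else false with hφ
  -- the image has at most 2^(n*r) elements
  have himage : (s.image φ).card ≤ 2 ^ (n * r) := by
    have hinj : Set.InjOn (fun g : Matrix (Fin n) (Fin n) Bool => fun i : ↥T => g i)
        ↑(s.image φ) := by
      intro g hg g' hg' hgg'
      simp only [Finset.coe_image, Set.mem_image] at hg hg'
      obtain ⟨f, _, rfl⟩ := hg
      obtain ⟨f', _, rfl⟩ := hg'
      funext i j
      by_cases hi : i ∈ T
      · have := congrFun (congrFun hgg' ⟨i, hi⟩) j
        simpa using this
      · simp [hφ, hi]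
    calc (s.image φ).card ≤ (Finset.univ : Finset (↥T → Fin n → Bool)).card :=
          Finset.card_le_card_of_injOn _ (fun _ _ => Finset.mem_univ _) hinj
      _ = 2 ^ (n * r) := by
          rw [Finset.card_univ, Fintype.card_fun]
          simp [Fintype.card_coe, hT, pow_mul, mul_comm]
  -- each fiber has at most 2^(r*(n-r)) elements
  have hfiber : ∀ a ∈ s.image φ, (s.filter fun f => φ f = a).card ≤ 2 ^ (r * (n - r)) := by
    intro a ha
    set W : Submodule ℝ (Fin n → ℝ) := span ℝ (signMatrix n n a '' ↑T) with hW
    set Z : Finset (Fin n → Bool) := Finset.univ.filter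
        (fun b : Fin n → Bool => (fun j => if b j then (1:ℝ) else -1) ∈ W) with hZ
    -- dimension of W is at most r
    have hWrank : Module.finrank ℝ W ≤ r := by
      haveI : Fintype ↑(signMatrix n n a '' ↑T) := Set.fintypeImage _ _
      have : Module.finrank ℝ W ≤ (signMatrix n n a '' ↑T).toFinset.card :=
        finrank_span_le_card _
      refine this.trans ?_
      refine (le_of_eq (congrArg Finset.card
        (Set.toFinset_image (signMatrix n n a) (↑T : Set (Fin n))))).trans ?_
      calc _ ≤ (↑T : Set (Fin n)).toFinset.card := Finset.card_image_le
        _ = r := by simp [hT]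
    have hZcard : Z.card ≤ 2 ^ r :=
      (signVec_card_le n W).trans (Nat.pow_le_pow_right (by norm_num) hWrank)
    -- rows in T agree with a for any f in the fiber
    have hrow : ∀ f ∈ s.filter (fun f => φ f = a), ∀ i ∈ T, f i = a i := by
      intro f hf i hi
      simp only [Finset.mem_filter] at hf
      funext j
      have := congrFun (congrFun hf.2 i) j
      simpa [hφ, hi] using this
    have hspan : ∀ f ∈ s.filter (fun f => φ f = a),
        span ℝ (signMatrix n n f '' ↑T) = W := by
      intro f hf
      rw [hW]
      congr 1
      apply Set.image_congr
      intro i hi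
      have := hrow f hf i hi
      funext j
      simp [signMatrix, this]
    -- injection into functions from complement of T to Z
    have hinj : Set.InjOn (fun f : Matrix (Fin n) (Fin n) Bool =>
        fun i : ↥(Finset.univ \ T) => f i.1) ↑(s.filter fun f => φ f = a) := by
      intro f hf f' hf' hff'
      simp only [Finset.mem_coe] at hf hf'
      funext i j
      by_cases hi : i ∈ T
      · rw [hrow f hf i hi, ← hrow f' hf' i hi]
      · have := congrFun (congrFun hff' ⟨i, by simp [hi]⟩) j
        simpa using this
    have hmaps : ∀ f ∈ s.filter (fun f => φ f = a),
        (fun i : ↥(Finset.univ \ T) => f i.1) ∈ (Finset.univ : Finset (↥(Finset.univ \ T) → ↥Z)).image (fun g => fun i => (g i : Fin n → Bool)) := by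
      intro f hf
      refine Finset.mem_image.mpr ⟨fun i => ⟨f i.1, ?_⟩, Finset.mem_univ _, rfl⟩
      -- f i.1 is a sign vector in W
      have hfs : f ∈ s := (Finset.mem_filter.mp hf).1
      have hP := (Finset.mem_filter.mp hfs).2
      have hiT : i.1 ∉ T := by
        have := i.2
        simp only [Finset.mem_sdiff] at this
        exact this.2
      have := hP i.1 hiT
      rw [hspan f hf] at this
      simp only [hZ, Finset.mem_filter, Finset.mem_univ, true_and]
      convert this using 1
      rfl
    calc (s.filter fun f => φ f = a).card
        ≤ ((Finset.univ : Finset (↥(Finset.univ \ T) → ↥Z)).image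
            (fun g => fun i => (g i : Fin n → Bool))).card :=
          Finset.card_le_card_of_injOn _ hmaps hinj
      _ ≤ (Finset.univ : Finset (↥(Finset.univ \ T) → ↥Z)).card := Finset.card_image_le
      _ = Z.card ^ (Finset.univ \ T).card := by
          rw [Finset.card_univ, Fintype.card_fun, Fintype.card_coe, Fintype.card_coe]
      _ ≤ (2 ^ r) ^ ((Finset.univ \ T).card) := Nat.pow_le_pow_left hZcard _
      _ = (2 ^ r) ^ (n - r) := by rw [Finset.card_univ_diff, hT]; simp
      _ = 2 ^ (r * (n - r)) := by rw [← pow_mul]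
  calc s.card ≤ 2 ^ (r * (n - r)) * (s.image φ).card :=
        Finset.card_le_mul_card_image s _ hfiber
    _ ≤ 2 ^ (r * (n - r)) * 2 ^ (n * r) := by
        exact Nat.mul_le_mul_left _ himage

open Module Submodule in
theorem countBad (n r : ℕ) (hr : r ≤ n) :
    (Finset.univ.filter fun f : Matrix (Fin n) (Fin n) Bool =>
        (signMatrix n n f).rank ≤ r).card ≤ 2 ^ n * (2 ^ (r * (n - r)) * 2 ^ (n * r)) := by
  have hsub : (Finset.univ.filter fun f : Matrix (Fin n) (Fin n) Bool =>
      (signMatrix n n f).rank ≤ r) ⊆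
      (Finset.univ.powersetCard r).biUnion (fun T =>
        Finset.univ.filter fun f : Matrix (Fin n) (Fin n) Bool =>
          ∀ i ∉ T, signMatrix n n f i ∈ span ℝ (signMatrix n n f '' ↑T)) := by
    intro f hf
    simp only [Finset.mem_filter, Finset.mem_univ, true_and] at hf
    set M := signMatrix n n f with hM
    have hrank : Module.finrank ℝ (span ℝ (Set.range M)) ≤ r := by
      exact (Matrix.rank_eq_finrank_span_row M).symm.le.trans hf
    obtain ⟨t, hts, hspan, hli⟩ := exists_linearIndependent ℝ (Set.range M)
    have htfin : t.Finite := hli.setFinite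
    haveI := htfin.fintype
    have htcard : t.toFinset.card ≤ r := by
      rw [← finrank_span_set_eq_card hli, hspan]
      exact hrank
    -- choose indices realizing t
    set g : ↥t.toFinset → Fin n := fun w => (hts (Set.mem_toFinset.mp w.2)).choose with hg
    have hgspec : ∀ w : ↥t.toFinset, M (g w) = w.1 :=
      fun w => (hts (Set.mem_toFinset.mp w.2)).choose_spec
    set T₀ : Finset (Fin n) := t.toFinset.attach.image g with hT₀
    have hT₀card : T₀.card ≤ r := by
      calc T₀.card ≤ t.toFinset.attach.card := Finset.card_image_le
        _ = t.toFinset.card := Finset.card_attach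
        _ ≤ r := htcard
    obtain ⟨T, hT₀T, _, hTcard⟩ := Finset.exists_subsuperset_card_eq
      (Finset.subset_univ T₀) hT₀card (by simpa using hr)
    have htsub : t ⊆ M '' ↑T := by
      intro w hw
      refine ⟨g ⟨w, Set.mem_toFinset.mpr hw⟩, ?_, hgspec _⟩
      exact hT₀T (Finset.mem_image.mpr ⟨_, Finset.mem_attach _ _, rfl⟩)
    have hWle : span ℝ (Set.range M) ≤ span ℝ (M '' ↑T) := by
      rw [← hspan]
      exact Submodule.span_mono htsub
    refine Finset.mem_biUnion.mpr ⟨T, ?_, ?_⟩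
    · exact Finset.mem_powersetCard.mpr ⟨Finset.subset_univ _, hTcard⟩
    · simp only [Finset.mem_filter, Finset.mem_univ, true_and]
      intro i _
      exact hWle (Submodule.subset_span ⟨i, rfl⟩)
  calc _ ≤ _ := Finset.card_le_card hsub
    _ ≤ ∑ T ∈ Finset.univ.powersetCard r, (Finset.univ.filter
          fun f : Matrix (Fin n) (Fin n) Bool =>
            ∀ i ∉ T, signMatrix n n f i ∈ span ℝ (signMatrix n n f '' ↑T)).card :=
        Finset.card_biUnion_le
    _ ≤ ∑ T ∈ Finset.univ.powersetCard r, 2 ^ (r * (n - r)) * 2 ^ (n * r) := by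
        apply Finset.sum_le_sum
        intro T hT
        exact countA n r T (Finset.mem_powersetCard.mp hT).2
    _ = (Finset.univ.powersetCard r).card * (2 ^ (r * (n - r)) * 2 ^ (n * r)) := by
        rw [Finset.sum_const, smul_eq_mul]
    _ ≤ 2 ^ n * (2 ^ (r * (n - r)) * 2 ^ (n * r)) := by
        apply Nat.mul_le_mul_right
        rw [Finset.card_powersetCard, Finset.card_univ, Fintype.card_fin]
        calc n.choose r ≤ ∑ k ∈ Finset.range (n + 1), n.choose k :=
              Finset.single_le_sum (fun _ _ => Nat.zero_le _)
                (Finset.mem_range.mpr (by omega))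
          _ = 2 ^ n := Nat.sum_range_choose n

/-- For fixed `0 < δ < 1`, a random `n × n` `±1` matrix has rank at least `(1−δ)n` over
`ℝ` with probability at least `1 − 2^{−c δ² n²}`. -/
theorem rank_large_whp (δ : ℝ) (hδ0 : 0 < δ) (hδ1 : δ < 1) :
    ∃ c : ℝ, 0 < c ∧ ∃ n₀ : ℕ, ∀ n : ℕ, n₀ ≤ n →
      1 - (2 : ℝ) ^ (-(c * δ ^ 2 * (n : ℝ) ^ 2)) ≤
        probMatrix n n (fun M => (1 - δ) * (n : ℝ) ≤ (M.rank : ℝ)) := by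
  refine ⟨1/2, by norm_num, ⌈(2:ℝ)/δ^2⌉₊ + 1, fun n hn => ?_⟩
  have hn1 : 1 ≤ n := le_trans (Nat.le_add_left 1 _) hn
  have hnR : (1:ℝ) ≤ (n:ℝ) := by exact_mod_cast hn1
  have hδn : (2:ℝ)/δ^2 ≤ n := by
    calc (2:ℝ)/δ^2 ≤ ⌈(2:ℝ)/δ^2⌉₊ := Nat.le_ceil _
      _ ≤ n := by exact_mod_cast Nat.le_of_succ_le hn
  have h2 : 2 ≤ δ^2 * n := by
    rw [div_le_iff₀ (by positivity)] at hδn; linarith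
  set k : ℕ := ⌈δ * n⌉₊ with hk
  have hkR : δ * n ≤ (k:ℝ) := Nat.le_ceil _
  have hkn : k ≤ n := Nat.ceil_le.mpr (by nlinarith)
  set r : ℕ := n - k with hr
  have hrn : r ≤ n := Nat.sub_le _ _
  have hnr : n - r = k := by omega
  set P : Matrix (Fin n) (Fin n) ℝ → Prop :=
    fun M => (1 - δ) * (n : ℝ) ≤ (M.rank : ℝ) with hP
  set bad := Finset.univ.filter
    (fun f : Matrix (Fin n) (Fin n) Bool => ¬ P (signMatrix n n f)) with hbad
  have hbadsub : bad ⊆ Finset.univ.filter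
      (fun f : Matrix (Fin n) (Fin n) Bool => (signMatrix n n f).rank ≤ r) := by
    intro f hf
    simp only [hbad, hP, Finset.mem_filter, Finset.mem_univ, true_and, not_le] at hf ⊢
    have hrank_le : (signMatrix n n f).rank ≤ n := by
      simpa using (signMatrix n n f).rank_le_card_width
    have hrankR : ((signMatrix n n f).rank : ℝ) ≤ n := by exact_mod_cast hrank_le
    have h3 : δ * n ≤ ((n - (signMatrix n n f).rank : ℕ) : ℝ) := by
      rw [Nat.cast_sub hrank_le]; nlinarith
    have h4 : k ≤ n - (signMatrix n n f).rank := Nat.ceil_le.mpr h3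
    omega
  have hbadcard : bad.card ≤ 2 ^ n * (2 ^ (r * (n - r)) * 2 ^ (n * r)) :=
    le_trans (Finset.card_le_card hbadsub) (countBad n r hrn)
  have hbadcard' : (bad.card : ℝ) ≤ (2:ℝ) ^ (n + (r * (n - r)) + (n * r)) := by
    calc (bad.card : ℝ) ≤ ((2 ^ n * (2 ^ (r * (n - r)) * 2 ^ (n * r)) : ℕ) : ℝ) := by
          exact_mod_cast hbadcard
      _ = (2:ℝ) ^ (n + (r * (n - r)) + (n * r)) := by
          push_cast
          ring
  -- total count
  have htotal : (Finset.univ.filter fun f : Matrix (Fin n) (Fin n) Bool =>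
      P (signMatrix n n f)).card + bad.card = 2 ^ (n * n) := by
    rw [hbad, Finset.card_filter_add_card_filter_not, Finset.card_univ]
    have : Fintype.card (Matrix (Fin n) (Fin n) Bool) = Fintype.card (Fin n → Fin n → Bool) :=
      Fintype.card_congr (Equiv.refl _)
    rw [this]
    simp [Fintype.card_fun, pow_mul]
  -- the key exponent inequality
  have hexp : ((n + (r * (n - r)) + (n * r) : ℕ) : ℝ)
      ≤ -(1/2 * δ^2 * (n:ℝ)^2) + ((n*n : ℕ) : ℝ) := by
    rw [hnr]
    have hrR : ((r:ℕ):ℝ) = (n:ℝ) - k := by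
      rw [hr, Nat.cast_sub hkn]
    push_cast
    rw [hrR]
    have hk0 : (0:ℝ) ≤ δ * n := by positivity
    have hk2 : (δ*n)^2 ≤ (k:ℝ)^2 := by nlinarith
    nlinarith [sq_nonneg ((n:ℝ) - k), sq_nonneg (k:ℝ)]
  -- convert to rpow comparison
  have hkey : (bad.card : ℝ) ≤ (2:ℝ) ^ (-(1/2 * δ^2 * (n:ℝ)^2)) * 2 ^ (n*n) := by
    calc (bad.card : ℝ) ≤ (2:ℝ) ^ (n + (r * (n - r)) + (n * r)) := hbadcard'
      _ = (2:ℝ) ^ (((n + (r * (n - r)) + (n * r) : ℕ)) : ℝ) :=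
          (Real.rpow_natCast 2 _).symm
      _ ≤ (2:ℝ) ^ (-(1/2 * δ^2 * (n:ℝ)^2) + ((n*n : ℕ) : ℝ)) :=
          Real.rpow_le_rpow_of_exponent_le one_le_two hexp
      _ = (2:ℝ) ^ (-(1/2 * δ^2 * (n:ℝ)^2)) * 2 ^ (n*n) := by
          rw [Real.rpow_add (by norm_num), Real.rpow_natCast]
  -- finish
  rw [probMatrix]
  have hpow : (0:ℝ) < 2 ^ (n*n) := by positivity
  rw [le_div_iff₀ hpow]
  have hgood : ((Finset.univ.filter fun f : Matrix (Fin n) (Fin n) Bool =>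
      P (signMatrix n n f)).card : ℝ) = 2 ^ (n*n) - bad.card := by
    have := htotal
    have hc : ((Finset.univ.filter fun f : Matrix (Fin n) (Fin n) Bool =>
        P (signMatrix n n f)).card : ℝ) + bad.card = ((2 ^ (n*n) : ℕ) : ℝ) := by
      exact_mod_cast congrArg (Nat.cast : ℕ → ℝ) this
    push_cast at hc
    linarith
  rw [hgood]
  have : (1 - (2:ℝ) ^ (-(1/2 * δ ^ 2 * (n:ℝ) ^ 2))) * 2 ^ (n*n)
      = 2 ^ (n*n) - (2:ℝ) ^ (-(1/2 * δ^2 * (n:ℝ)^2)) * 2 ^ (n*n) := by ring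
  rw [this]
  linarith
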